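/- arXiv:2509.25972 — 2 statements merged into one kernel-verified Lean document; each statement's English description precedes it below -/
import Mathlib

section
/- The Riordan group R′(ℤ) is an URE-group: for every integer n ≥ 1, if (α, ω) and (α′, ω′) are two pairs with α, α′ ∈ ℤ⟦x⟧ of constant coefficient 1 and ω, ω′ ∈ J(ℤ) satisfying ω^[n] = ω′^[n] and ∏_{i=0}^{n−1} (α ∘ ω^[i]) = ∏_{i=0}^{n−1} (α′ ∘ ω′^[i]) (equivalently, R(α,ω)^n = R(α′,ω′)^n), then α = α′ and ω = ω′. -/
open PowerSeries Finset

/-- Composition `f ∘ g` of formal power series (substitution of `g` into `f`).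
This coefficientwise formula agrees with the usual substitution whenever the
constant coefficient of `g` is zero, since then `g ^ j` has order at least `j`. -/
noncomputable def psComp {Z : Type*} [CommRing Z] (f g : Z⟦X⟧) : Z⟦X⟧ :=
  PowerSeries.mk fun n => ∑ j ∈ Finset.range (n + 1), coeff j f * coeff n (g ^ j)

/-- The `m`-th compositional iterate: `ω^[0] = X` and `ω^[m+1] = ω ∘ ω^[m]`. -/
noncomputable def psIter {Z : Type*} [CommRing Z] (ω : Z⟦X⟧) : ℕ → Z⟦X⟧
  | 0 => PowerSeries.X
  | m + 1 => psComp ω (psIter ω m)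

lemma coeff_psComp (f g : ℤ⟦X⟧) (n : ℕ) :
    coeff n (psComp f g) = ∑ j ∈ Finset.range (n + 1), coeff j f * coeff n (g ^ j) := by
  simp [psComp]

lemma constCoeff_psComp (f g : ℤ⟦X⟧) :
    constantCoeff (psComp f g) = constantCoeff f := by
  rw [← coeff_zero_eq_constantCoeff, coeff_psComp]
  simp

lemma coeff_one_psComp (f g : ℤ⟦X⟧) (hf : constantCoeff f = 0) :
    coeff 1 (psComp f g) = coeff 1 f * coeff 1 g := by
  rw [coeff_psComp, Finset.sum_range_succ, Finset.sum_range_one]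
  rw [← coeff_zero_eq_constantCoeff] at hf
  simp [hf]

lemma X_pow_dvd_sub_pow (f g : ℤ⟦X⟧) (k j : ℕ) (h : X ^ k ∣ f - g) :
    X ^ k ∣ f ^ j - g ^ j :=
  h.trans (sub_dvd_pow_sub_pow f g j)

lemma X_pow_succ_dvd_sub_pow (f g : ℤ⟦X⟧) (hf : constantCoeff f = 0)
    (hg : constantCoeff g = 0) (k j : ℕ) (hj : 2 ≤ j) (h : X ^ k ∣ f - g) :
    X ^ (k + 1) ∣ f ^ j - g ^ j := by
  obtain ⟨m, rfl⟩ : ∃ m, j = m + 2 := ⟨j - 2, by omega⟩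
  have hXf : (X : ℤ⟦X⟧) ∣ f := X_dvd_iff.2 hf
  have hXg : (X : ℤ⟦X⟧) ∣ g := X_dvd_iff.2 hg
  have key : f ^ (m + 2) - g ^ (m + 2)
      = (f - g) * f ^ (m + 1) + (f ^ (m + 1) - g ^ (m + 1)) * g := by ring
  rw [key, pow_succ]
  exact dvd_add (mul_dvd_mul h (hXf.trans (dvd_pow_self f (Nat.succ_ne_zero m))))
    (mul_dvd_mul (X_pow_dvd_sub_pow f g k (m + 1) h) hXg)

lemma coeff_pow_self (f : ℤ⟦X⟧) (hf : constantCoeff f = 0) (k : ℕ) :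
    coeff k (f ^ k) = (coeff 1 f) ^ k := by
  induction k with
  | zero => simp
  | succ k ih =>
    have hdvd : (X : ℤ⟦X⟧) ^ k ∣ f ^ k := pow_dvd_pow_of_dvd (X_dvd_iff.2 hf) k
    rw [pow_succ', coeff_mul, Finset.sum_eq_single (1, k)]
    · rw [ih]; ring
    · rintro ⟨i, j⟩ hmem hne
      rw [Finset.HasAntidiagonal.mem_antidiagonal] at hmem
      rcases Nat.eq_zero_or_pos i with hi | hi
      · subst hi
        rw [← coeff_zero_eq_constantCoeff] at hf
        simp [hf]
      · have hi1 : i ≠ 1 := fun h1 => hne (by simp at hmem ⊢; omega)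
        have hjk : j < k := by omega
        simp [PowerSeries.X_pow_dvd_iff.1 hdvd j hjk]
    · intro h; exact absurd (Finset.HasAntidiagonal.mem_antidiagonal.2 (by omega)) h

lemma psComp_inner (ω F G : ℤ⟦X⟧) (hF : constantCoeff F = 0) (hG : constantCoeff G = 0)
    (k : ℕ) (h : ∀ j < k, coeff j F = coeff j G) :
    (∀ m < k, coeff m (psComp ω F) = coeff m (psComp ω G)) ∧
      coeff k (psComp ω F) - coeff k (psComp ω G)
        = coeff 1 ω * (coeff k F - coeff k G) := by
  have hdvd : (X : ℤ⟦X⟧) ^ k ∣ F - G := by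
    rw [PowerSeries.X_pow_dvd_iff]
    intro m hm
    rw [map_sub, h m hm, sub_self]
  constructor
  · intro m hm
    rw [coeff_psComp, coeff_psComp]
    refine Finset.sum_congr rfl fun j _ => ?_
    have : coeff m (F ^ j) = coeff m (G ^ j) := by
      have := PowerSeries.X_pow_dvd_iff.1 (X_pow_dvd_sub_pow F G k j hdvd) m hm
      rw [map_sub, sub_eq_zero] at this
      exact this
    rw [this]
  · rw [coeff_psComp, coeff_psComp, ← Finset.sum_sub_distrib]
    have hterm : ∀ j ∈ Finset.range (k + 1),
        coeff j ω * coeff k (F ^ j) - coeff j ω * coeff k (G ^ j)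
          = coeff j ω * (coeff k (F ^ j) - coeff k (G ^ j)) := fun j _ => by ring
    rw [Finset.sum_congr rfl hterm, Finset.sum_eq_single 1]
    · simp
    · intro j hj hj1
      rcases Nat.eq_zero_or_pos j with rfl | hpos
      · simp
      · have h2 : 2 ≤ j := by omega
        have := PowerSeries.X_pow_dvd_iff.1
          (X_pow_succ_dvd_sub_pow F G hF hG k j h2 hdvd) k (Nat.lt_succ_self k)
        rw [map_sub] at this
        rw [show coeff k (F ^ j) - coeff k (G ^ j) = 0 from this, mul_zero]
    · intro h1
      have : k = 0 := by simp at h1; omega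
      subst this
      rw [← coeff_zero_eq_constantCoeff] at hF hG
      rw [pow_one, pow_one, hF, hG, sub_self, mul_zero]

lemma psComp_outer (α α' G : ℤ⟦X⟧) (k : ℕ) (h : ∀ j < k, coeff j α = coeff j α') :
    (∀ m < k, coeff m (psComp α G) = coeff m (psComp α' G)) ∧
      coeff k (psComp α G) - coeff k (psComp α' G)
        = (coeff k α - coeff k α') * coeff k (G ^ k) := by
  constructor
  · intro m hm
    rw [coeff_psComp, coeff_psComp]
    refine Finset.sum_congr rfl fun j hj => ?_
    rw [h j (lt_of_lt_of_le (Finset.mem_range.1 hj) (by omega))]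
  · rw [coeff_psComp, coeff_psComp, ← Finset.sum_sub_distrib]
    have hterm : ∀ j ∈ Finset.range (k + 1),
        coeff j α * coeff k (G ^ j) - coeff j α' * coeff k (G ^ j)
          = (coeff j α - coeff j α') * coeff k (G ^ j) := fun j _ => by ring
    rw [Finset.sum_congr rfl hterm, Finset.sum_eq_single k]
    · intro j hj hjk
      rw [h j (lt_of_le_of_ne (by simp at hj; omega) hjk), sub_self, zero_mul]
    · intro h1; exact absurd (Finset.mem_range.2 (Nat.lt_succ_self k)) h1

lemma mul_coeff_diff (A A' B B' : ℤ⟦X⟧) (k : ℕ)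
    (hA : ∀ m < k, coeff m A = coeff m A') (hB : ∀ m < k, coeff m B = coeff m B') :
    (∀ m < k, coeff m (A * B) = coeff m (A' * B')) ∧
      coeff k (A * B) - coeff k (A' * B')
        = constantCoeff A * (coeff k B - coeff k B')
          + (coeff k A - coeff k A') * constantCoeff B' := by
  constructor
  · intro m hm
    rw [coeff_mul, coeff_mul]
    refine Finset.sum_congr rfl fun p hp => ?_
    rw [Finset.HasAntidiagonal.mem_antidiagonal] at hp
    rw [hA p.1 (by omega), hB p.2 (by omega)]
  · rw [coeff_mul, coeff_mul, ← Finset.sum_sub_distrib]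
    have hterm : ∀ p ∈ Finset.HasAntidiagonal.antidiagonal k,
        coeff p.1 A * coeff p.2 B - coeff p.1 A' * coeff p.2 B'
          = coeff p.1 A * (coeff p.2 B - coeff p.2 B')
            + (coeff p.1 A - coeff p.1 A') * coeff p.2 B' := fun p _ => by ring
    rw [Finset.sum_congr rfl hterm, Finset.sum_add_distrib]
    congr 1
    · rw [Finset.sum_eq_single (0, k)]
      · rw [coeff_zero_eq_constantCoeff]
      · rintro ⟨i, j⟩ hmem hne
        rw [Finset.HasAntidiagonal.mem_antidiagonal] at hmem
        have : j < k := by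
          rcases Nat.lt_or_ge j k with h1 | h1
          · exact h1
          · exact absurd (by simp at hmem ⊢; omega : (i, j) = ((0 : ℕ), k)) hne
        rw [hB j this, sub_self, mul_zero]
      · intro h1; exact absurd (Finset.HasAntidiagonal.mem_antidiagonal.2 (by omega)) h1
    · rw [Finset.sum_eq_single (k, 0)]
      · rw [coeff_zero_eq_constantCoeff]
      · rintro ⟨i, j⟩ hmem hne
        rw [Finset.HasAntidiagonal.mem_antidiagonal] at hmem
        have : i < k := by
          rcases Nat.lt_or_ge i k with h1 | h1
          · exact h1
          · exact absurd (by simp at hmem ⊢; omega : (i, j) = (k, (0 : ℕ))) hne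
        rw [hA i this, sub_self, zero_mul]
      · intro h1; exact absurd (Finset.HasAntidiagonal.mem_antidiagonal.2 (by omega)) h1

lemma prod_coeff_diff (F F' : ℕ → ℤ⟦X⟧) (k : ℕ)
    (h0 : ∀ i, constantCoeff (F i) = 1) (h0' : ∀ i, constantCoeff (F' i) = 1)
    (hlt : ∀ i, ∀ m < k, coeff m (F i) = coeff m (F' i)) (n : ℕ) :
    (∀ m < k, coeff m (∏ i ∈ Finset.range n, F i) = coeff m (∏ i ∈ Finset.range n, F' i)) ∧
      coeff k (∏ i ∈ Finset.range n, F i) - coeff k (∏ i ∈ Finset.range n, F' i)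
        = ∑ i ∈ Finset.range n, (coeff k (F i) - coeff k (F' i)) := by
  induction n with
  | zero => simp
  | succ n ih =>
    rw [Finset.prod_range_succ, Finset.prod_range_succ, Finset.sum_range_succ]
    obtain ⟨ih1, ih2⟩ := ih
    obtain ⟨m1, m2⟩ := mul_coeff_diff _ _ _ _ k ih1 (hlt n)
    refine ⟨m1, ?_⟩
    rw [m2, ih2]
    have hc : constantCoeff (∏ i ∈ Finset.range n, F i) = 1 := by
      rw [map_prod]; exact Finset.prod_eq_one fun i _ => h0 i
    rw [hc, h0' n, one_mul, mul_one, add_comm]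

lemma psIter_const (ω : ℤ⟦X⟧) (hω0 : constantCoeff ω = 0) (m : ℕ) :
    constantCoeff (psIter ω m) = 0 := by
  induction m with
  | zero => simp [psIter]
  | succ m ih => rw [psIter, constCoeff_psComp]; exact hω0

lemma psIter_one (ω : ℤ⟦X⟧) (hω0 : constantCoeff ω = 0) (hω1 : coeff 1 ω = 1) (m : ℕ) :
    coeff 1 (psIter ω m) = 1 := by
  induction m with
  | zero => simp [psIter]
  | succ m ih => rw [psIter, coeff_one_psComp ω _ hω0, hω1, one_mul, ih]

lemma psIter_succ (ω : ℤ⟦X⟧) (m : ℕ) : psIter ω (m + 1) = psComp ω (psIter ω m) := rfl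

/-- the Riordan group `ℛ′(ℤ)` is an URE-group: if `R(α,ω)^n = R(α',ω')^n`
(for `n ≥ 1`), i.e. `ω^[n] = ω'^[n]` and `∏_{i=0}^{n−1}(α∘ω^[i]) = ∏_{i=0}^{n−1}(α'∘ω'^[i])`,
then `α = α'` and `ω = ω'`. -/
theorem riordan_group_int_URE (n : ℕ) (hn : 1 ≤ n) (α α' ω ω' : ℤ⟦X⟧)
    (hα : constantCoeff α = 1) (hα' : constantCoeff α' = 1)
    (hω0 : constantCoeff ω = 0) (hω1 : coeff 1 ω = 1)
    (hω'0 : constantCoeff ω' = 0) (hω'1 : coeff 1 ω' = 1)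
    (hiter : psIter ω n = psIter ω' n)
    (hprod : ∏ i ∈ Finset.range n, psComp α (psIter ω i)
        = ∏ i ∈ Finset.range n, psComp α' (psIter ω' i)) :
    α = α' ∧ ω = ω' := by
  have hn' : (n : ℤ) ≠ 0 := Int.natCast_ne_zero.mpr (by omega)
  have hwco : ∀ k, coeff k ω = coeff k ω' := by
    intro k
    induction k using Nat.strong_induction_on with
    | _ k ih =>
      have iter : ∀ m, (∀ j < k, coeff j (psIter ω m) = coeff j (psIter ω' m)) ∧
          coeff k (psIter ω m) - coeff k (psIter ω' m)
            = (m : ℤ) * (coeff k ω - coeff k ω') := by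
        intro m
        induction m with
        | zero => exact ⟨fun j _ => rfl, by simp [psIter]⟩
        | succ m ihm =>
          obtain ⟨ihm1, ihm2⟩ := ihm
          have hF0 := psIter_const ω hω0 m
          have hG0 := psIter_const ω' hω'0 m
          obtain ⟨i1, i2⟩ := psComp_inner ω (psIter ω m) (psIter ω' m) hF0 hG0 k ihm1
          obtain ⟨o1, o2⟩ := psComp_outer ω ω' (psIter ω' m) k ih
          have hGk : coeff k ((psIter ω' m) ^ k) = 1 := by
            rw [coeff_pow_self _ hG0, psIter_one ω' hω'0 hω'1 m, one_pow]
          rw [psIter_succ, psIter_succ]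
          constructor
          · intro j hj
            rw [i1 j hj, o1 j hj]
          · have hsplit : coeff k (psComp ω (psIter ω m)) - coeff k (psComp ω' (psIter ω' m))
                = (coeff k (psComp ω (psIter ω m)) - coeff k (psComp ω (psIter ω' m)))
                  + (coeff k (psComp ω (psIter ω' m)) - coeff k (psComp ω' (psIter ω' m))) := by
              ring
            rw [hsplit, i2, o2, hGk, hω1, one_mul, ihm2, mul_one]
            push_cast
            ring
      have h0 := (iter n).2
      rw [hiter, sub_self] at h0
      have := (mul_eq_zero.1 h0.symm).resolve_left hn'
      linarith
  have hww : ω = ω' := PowerSeries.ext hwco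
  subst hww
  refine ⟨?_, rfl⟩
  have haco : ∀ k, coeff k α = coeff k α' := by
    intro k
    induction k using Nat.strong_induction_on with
    | _ k ih =>
      have h0 : ∀ i, constantCoeff (psComp α (psIter ω i)) = 1 := fun i => by
        rw [constCoeff_psComp]; exact hα
      have h0' : ∀ i, constantCoeff (psComp α' (psIter ω i)) = 1 := fun i => by
        rw [constCoeff_psComp]; exact hα'
      have hlt : ∀ i, ∀ m < k,
          coeff m (psComp α (psIter ω i)) = coeff m (psComp α' (psIter ω i)) :=
        fun i => (psComp_outer α α' (psIter ω i) k ih).1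
      have hdiff : ∀ i, coeff k (psComp α (psIter ω i)) - coeff k (psComp α' (psIter ω i))
          = coeff k α - coeff k α' := fun i => by
        rw [(psComp_outer α α' (psIter ω i) k ih).2, coeff_pow_self _ (psIter_const ω hω0 i),
          psIter_one ω hω0 hω1 i, one_pow, mul_one]
      obtain ⟨p1, p2⟩ := prod_coeff_diff _ _ k h0 h0' hlt n
      rw [hprod, sub_self, Finset.sum_congr rfl (fun i _ => hdiff i), Finset.sum_const,
        Finset.card_range, nsmul_eq_mul] at p2
      have := (mul_eq_zero.1 p2.symm).resolve_left hn'
      linarith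
  exact PowerSeries.ext haco
end

section
/- Let Z be a commutative ring with unity and suppose that R′(Z) is an URE-group, i.e., for every integer n ≥ 1 and all pairs (α₁, ω₁), (α₂, ω₂) with αᵢ ∈ Z⟦x⟧ of constant coefficient 1 and ωᵢ ∈ J(Z), if ω₁^[n] = ω₂^[n] and ∏_{i=0}^{n−1} (α₁ ∘ ω₁^[i]) = ∏_{i=0}^{n−1} (α₂ ∘ ω₂^[i]) then α₁ = α₂ and ω₁ = ω₂. Let V ∈ Z⟦x⟧ have constant coefficient 1, let f ∈ Z⟦x⟧ have constant coefficient 1, let g ∈ J(Z), and suppose R(f,g) is in the stabiliser of the column vector of coefficients of V, i.e., f · (V ∘ g) = V. If (α, ω), with α of constant coefficient 1 and ω ∈ J(Z), is a root of order n of (f, g), i.e., ω^[n] = g and ∏_{i=0}^{n−1} (α ∘ ω^[i]) = f, then R(α,ω) is also in the stabiliser of that vector: α · (V ∘ ω) = V. -/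
open PowerSeries Finset

section Aux
variable {Z : Type*} [CommRing Z]

lemma psAux_coeff_pow_eq_zero {g : Z⟦X⟧} (hg : constantCoeff g = 0) {n j : ℕ} (h : n < j) :
    coeff n (g ^ j) = 0 := by
  have hX : (X : Z⟦X⟧) ^ j ∣ g ^ j := pow_dvd_pow_of_dvd (X_dvd_iff.mpr hg) j
  exact (X_pow_dvd_iff.mp hX) n h

lemma psAux_coeff_psComp_eq {f g : Z⟦X⟧} (hg : constantCoeff g = 0) {n N : ℕ} (hn : n < N) :
    coeff n (psComp f g) = ∑ j ∈ range N, coeff j f * coeff n (g ^ j) := by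
  rw [psComp, coeff_mk]
  apply Finset.sum_subset (Finset.range_subset_range.mpr hn)
  intro j hj hj'
  rw [psAux_coeff_pow_eq_zero hg (by simp only [mem_range] at hj' ⊢; omega), mul_zero]

lemma psAux_coeff_psComp_eval {f g : Z⟦X⟧} (hg : constantCoeff g = 0) {n N : ℕ} (hn : n < N) :
    coeff n (psComp f g) = coeff n ((trunc N f).eval₂ C g) := by
  rw [eval₂_trunc_eq_sum_range, map_sum, psAux_coeff_psComp_eq hg hn]
  exact Finset.sum_congr rfl fun j _ => (coeff_C_mul _ _ _).symm

lemma psAux_coeff_eval₂_congr {p q : Polynomial Z} {g : Z⟦X⟧} (hg : constantCoeff g = 0)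
    {n : ℕ} (h : ∀ j ≤ n, p.coeff j = q.coeff j) :
    coeff n (p.eval₂ C g) = coeff n (q.eval₂ C g) := by
  set M := max p.natDegree q.natDegree + 1 with hM
  rw [Polynomial.eval₂_eq_sum_range' C (show p.natDegree < M by omega) g,
      Polynomial.eval₂_eq_sum_range' C (show q.natDegree < M by omega) g,
      map_sum, map_sum]
  apply Finset.sum_congr rfl
  intro j _
  by_cases hj : j ≤ n
  · rw [h j hj]
  · rw [coeff_C_mul, coeff_C_mul, psAux_coeff_pow_eq_zero hg (by omega), mul_zero, mul_zero]

lemma psComp_mul {a b g : Z⟦X⟧} (hg : constantCoeff g = 0) :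
    psComp (a * b) g = psComp a g * psComp b g := by
  ext n
  rw [psAux_coeff_psComp_eval hg (lt_add_one n) (f := a * b), PowerSeries.coeff_mul]
  have : ∀ p ∈ antidiagonal n,
      coeff p.1 (psComp a g) * coeff p.2 (psComp b g)
        = coeff p.1 ((trunc (n+1) a).eval₂ C g)
          * coeff p.2 ((trunc (n+1) b).eval₂ C g) := by
    intro p hp
    have hp' := Finset.HasAntidiagonal.mem_antidiagonal.mp hp
    rw [psAux_coeff_psComp_eval hg (show p.1 < n+1 by omega), psAux_coeff_psComp_eval hg (show p.2 < n+1 by omega)]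
  rw [Finset.sum_congr rfl this, ← PowerSeries.coeff_mul, ← Polynomial.eval₂_mul]
  apply psAux_coeff_eval₂_congr hg
  intro j hj
  rw [coeff_trunc, if_pos (by omega), PowerSeries.coeff_mul, Polynomial.coeff_mul]
  apply Finset.sum_congr rfl
  intro p hp
  have hp' := Finset.HasAntidiagonal.mem_antidiagonal.mp hp
  rw [coeff_trunc, coeff_trunc, if_pos (by omega), if_pos (by omega)]

lemma psComp_one (g : Z⟦X⟧) : psComp 1 g = 1 := by
  ext n
  rw [psComp, coeff_mk, Finset.sum_eq_single 0]
  · simp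
  · intro j _ hj; rw [coeff_one, if_neg hj, zero_mul]
  · intro h; exact absurd (Finset.mem_range.mpr (Nat.succ_pos n)) h

lemma psComp_pow {a g : Z⟦X⟧} (hg : constantCoeff g = 0) (k : ℕ) :
    psComp (a ^ k) g = (psComp a g) ^ k := by
  induction k with
  | zero => simpa using psComp_one g
  | succ k ih => rw [pow_succ, pow_succ, psComp_mul hg, ih]

lemma psComp_X_right (f : Z⟦X⟧) : psComp f X = f := by
  ext n
  rw [psComp, coeff_mk, Finset.sum_eq_single n]
  · simp
  · intro j _ hj; rw [coeff_X_pow, if_neg (Ne.symm hj), mul_zero]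
  · intro h; exact absurd (Finset.self_mem_range_succ n) h

lemma constantCoeff_psComp (f g : Z⟦X⟧) : constantCoeff (psComp f g) = constantCoeff f := by
  rw [← coeff_zero_eq_constantCoeff_apply, psComp, coeff_mk]
  simp

lemma psComp_assoc {f g h : Z⟦X⟧} (hg : constantCoeff g = 0) (hh : constantCoeff h = 0) :
    psComp (psComp f g) h = psComp f (psComp g h) := by
  have hgh : constantCoeff (psComp g h) = 0 := by rw [constantCoeff_psComp, hg]
  ext n
  rw [psAux_coeff_psComp_eq hh (lt_add_one n), psAux_coeff_psComp_eq hgh (lt_add_one n)]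
  have L : ∀ j ∈ range (n+1), coeff j (psComp f g) * coeff n (h ^ j)
      = ∑ k ∈ range (n+1), coeff k f * coeff j (g ^ k) * coeff n (h ^ j) := by
    intro j hj
    rw [psAux_coeff_psComp_eq hg (Finset.mem_range.mp hj), Finset.sum_mul]
  have R : ∀ k ∈ range (n+1), coeff k f * coeff n ((psComp g h) ^ k)
      = ∑ j ∈ range (n+1), coeff k f * coeff j (g ^ k) * coeff n (h ^ j) := by
    intro k _
    rw [← psComp_pow hh, psAux_coeff_psComp_eq hh (lt_add_one n), Finset.mul_sum]
    exact Finset.sum_congr rfl fun j _ => (mul_assoc _ _ _).symm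
  rw [Finset.sum_congr rfl L, Finset.sum_congr rfl R, Finset.sum_comm]

lemma psIter_constantCoeff {ω : Z⟦X⟧} (hω : constantCoeff ω = 0) :
    ∀ i, constantCoeff (psIter ω i) = 0
  | 0 => constantCoeff_X
  | (i+1) => by rw [psIter, constantCoeff_psComp]; exact hω

lemma psAux_prod_telescope {R : Type*} [CommRing R] (a b : ℕ → R)
    (hab : ∀ i, a i * b i = 1) (n : ℕ) :
    ∏ i ∈ range n, (a (i+1) * b i) = a n * b 0 := by
  induction n with
  | zero => simpa using (hab 0).symm
  | succ n ih =>
    rw [Finset.prod_range_succ, ih]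
    calc a n * b 0 * (a (n+1) * b n) = (a n * b n) * (a (n+1) * b 0) := by ring
      _ = a (n+1) * b 0 := by rw [hab n, one_mul]

end Aux

/-- suppose `ℛ′(Z)` is an URE-group. If `R(f,g)` stabilises the column
vector of coefficients of `V` (with `V(0) = 1`), i.e. `f · (V ∘ g) = V`, and `R(α,ω)` is a
root of order `n` of `R(f,g)` (i.e. `ω^[n] = g` and `∏_{i=0}^{n−1}(α∘ω^[i]) = f`), then
`R(α,ω)` also stabilises that vector: `α · (V ∘ ω) = V`. -/

theorem riordan_root_stabiliser_of_URE {Z : Type*} [CommRing Z]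
    (hURE : ∀ n : ℕ, 1 ≤ n → ∀ α₁ ω₁ α₂ ω₂ : Z⟦X⟧,
      constantCoeff α₁ = 1 → constantCoeff ω₁ = 0 → coeff 1 ω₁ = 1 →
      constantCoeff α₂ = 1 → constantCoeff ω₂ = 0 → coeff 1 ω₂ = 1 →
      psIter ω₁ n = psIter ω₂ n →
      (∏ i ∈ Finset.range n, psComp α₁ (psIter ω₁ i))
        = (∏ i ∈ Finset.range n, psComp α₂ (psIter ω₂ i)) →
      α₁ = α₂ ∧ ω₁ = ω₂)
    (V f : Z⟦X⟧) (hV : constantCoeff V = 1) (hf : constantCoeff f = 1)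
    (g : Z⟦X⟧) (hg0 : constantCoeff g = 0) (hg1 : coeff 1 g = 1)
    (hstab : f * psComp V g = V)
    (n : ℕ) (hn : 1 ≤ n) (α ω : Z⟦X⟧)
    (hα : constantCoeff α = 1)
    (hω0 : constantCoeff ω = 0) (hω1 : coeff 1 ω = 1)
    (hiter : psIter ω n = g)
    (hprod : ∏ i ∈ Finset.range n, psComp α (psIter ω i) = f) :
    α * psComp V ω = V := by
  have hψ0 : ∀ i, constantCoeff (psIter ω i) = 0 := psIter_constantCoeff hω0
  set Vinv := invOfUnit V 1 with hVinv
  have hVV : V * Vinv = 1 := mul_invOfUnit V 1 (by simpa using hV)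
  set α' := α * psComp V ω * Vinv with hα'
  have hα'0 : constantCoeff α' = 1 := by
    rw [hα', map_mul, map_mul, hα, constantCoeff_psComp, hV, hVinv, constantCoeff_invOfUnit]
    simp
  have key : ∀ i, psComp α' (psIter ω i)
      = psComp α (psIter ω i)
        * (psComp V (psIter ω (i+1)) * psComp Vinv (psIter ω i)) := by
    intro i
    rw [hα', psComp_mul (hψ0 i), psComp_mul (hψ0 i), psComp_assoc hω0 (hψ0 i),
      show psComp ω (psIter ω i) = psIter ω (i+1) from rfl, mul_assoc]
  have hone : ∀ i, psComp V (psIter ω i) * psComp Vinv (psIter ω i) = 1 := by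
    intro i
    rw [← psComp_mul (hψ0 i), hVV, psComp_one]
  have hprod' : ∏ i ∈ Finset.range n, psComp α' (psIter ω i) = 1 := by
    calc ∏ i ∈ Finset.range n, psComp α' (psIter ω i)
        = (∏ i ∈ Finset.range n, psComp α (psIter ω i))
          * ∏ i ∈ Finset.range n,
              (psComp V (psIter ω (i+1)) * psComp Vinv (psIter ω i)) := by
          rw [← Finset.prod_mul_distrib]
          exact Finset.prod_congr rfl fun i _ => key i
      _ = f * (psComp V (psIter ω n) * psComp Vinv (psIter ω 0)) := by
          rw [hprod, psAux_prod_telescope _ _ hone]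
      _ = 1 := by
          rw [hiter, show psIter ω 0 = (X : Z⟦X⟧) from rfl, psComp_X_right,
            ← mul_assoc, hstab, hVV]
  have hURE' := hURE n hn α' ω 1 ω hα'0 hω0 hω1 (by simp) hω0 hω1 rfl
    (by rw [hprod']; exact (Finset.prod_eq_one fun i _ => psComp_one _).symm)
  have hα'1 : α' = 1 := hURE'.1
  calc α * psComp V ω = α * psComp V ω * (Vinv * V) := by
        rw [mul_comm Vinv V, hVV, mul_one]
    _ = α' * V := by rw [hα']; ring
    _ = V := by rw [hα'1, one_mul]
end
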